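/- Let (X_j, dX_j)_{j ∈ J} be a family of saturated d-spaces. Equip the product space ∏_{j∈J} X_j (with the product topology) with the d-space structure in which a continuous path p : I → ∏ X_j is directed if and only if π_j ∘ p ∈ dX_j for every j, where π_j is the j-th projection. Then this product d-space is saturated. (Saturated d-spaces are closed under limits of d-spaces.) -/
import Mathlib


open unitInterval Topology Set

/-- Concatenation of two continuous paths `p q : C(I, X)` with `p 1 = q 0`,
traversing `p` on `[0, 1/2]` and `q` on `[1/2, 1]` (both at double speed). -/
noncomputable def concatPath {X : Type*} [TopologicalSpace X]
    (p q : C(unitInterval, X)) (h : p 1 = q 0) : C(unitInterval, X) :=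
  ((⟨p, rfl, rfl⟩ : Path (p 0) (p 1)).trans
    ((⟨q, rfl, rfl⟩ : Path (q 0) (q 1)).cast h rfl)).toContinuousMap

/-- A d-space structure on a topological space `X`: a set of continuous paths
`I → X` containing the constant paths, closed under concatenation and under
precomposition with continuous non-decreasing maps `I → I`. -/
structure DSpace (X : Type*) [TopologicalSpace X] where
  d : Set C(unitInterval, X)
  const_mem : ∀ x : X, ContinuousMap.const unitInterval x ∈ d
  concat_mem : ∀ p ∈ d, ∀ q ∈ d, ∀ h : p 1 = q 0, concatPath p q h ∈ d
  reparam_mem : ∀ p ∈ d, ∀ φ : C(unitInterval, unitInterval), Monotone ⇑φ → p.comp φ ∈ d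

/-- `c` is a directed function on the (open) set `U` for the set of directed
paths `d`: it is continuous on `U` and non-decreasing along every directed path
with image contained in `U`. -/
def IsDirectedFn {X : Type*} [TopologicalSpace X] (d : Set C(unitInterval, X))
    (U : Set X) (c : X → unitInterval) : Prop :=
  ContinuousOn c U ∧ ∀ p ∈ d, Set.range ⇑p ⊆ U → Monotone (c ∘ ⇑p)

/-- A path `p` is weakly directed when, for every directed function `c` on an
open `U`, the map `c ∘ p` is locally non-decreasing on `p ⁻¹' U`. -/
def IsWeaklyDirected {X : Type*} [TopologicalSpace X] (d : Set C(unitInterval, X))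
    (p : C(unitInterval, X)) : Prop :=
  ∀ U : Set X, IsOpen U → ∀ c : X → unitInterval, IsDirectedFn d U c →
    ∀ t : unitInterval, p t ∈ U →
      ∃ V ∈ 𝓝 t, V ⊆ ⇑p ⁻¹' U ∧ MonotoneOn (c ∘ ⇑p) V

/-- The set `d̂X` of weakly directed paths. -/
def satPaths {X : Type*} [TopologicalSpace X] (d : Set C(unitInterval, X)) :
    Set C(unitInterval, X) :=
  {p | IsWeaklyDirected d p}

/-- A set of directed paths is saturated when every weakly directed path is directed. -/
def IsSaturated {X : Type*} [TopologicalSpace X] (d : Set C(unitInterval, X)) : Prop :=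
  satPaths d = d


/-- If `d` is closed under monotone reparametrization, every `p ∈ d` is weakly
directed. -/
lemma mem_satPaths_of_reparam {X : Type*} [TopologicalSpace X]
    (d : Set C(unitInterval, X))
    (hre : ∀ p ∈ d, ∀ φ : C(unitInterval, unitInterval), Monotone ⇑φ → p.comp φ ∈ d)
    {p : C(unitInterval, X)} (hp : p ∈ d) : IsWeaklyDirected d p := by
  intro U hU c hc t ht
  have hmem : ⇑p ⁻¹' U ∈ 𝓝 t := (hU.preimage p.continuous).mem_nhds ht
  obtain ⟨a, b, _hab, hmemI, hsub⟩ := exists_Icc_mem_subset_of_mem_nhds hmem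
  refine ⟨Icc a b, hmemI, hsub, ?_⟩
  intro x hx y hy hxy
  set φ : C(unitInterval, unitInterval) :=
    ⟨fun s => max x (min y s), by fun_prop⟩ with hφ
  have hφmono : Monotone ⇑φ := fun s u hsu =>
    max_le_max le_rfl (min_le_min le_rfl hsu)
  have hφd := hre p hp φ hφmono
  have hrange : Set.range ⇑(p.comp φ) ⊆ U := by
    rintro _ ⟨s, rfl⟩
    apply hsub
    refine ⟨le_trans hx.1 (le_max_left _ _), ?_⟩
    exact max_le (le_trans hxy hy.2) (le_trans (min_le_left _ _) hy.2)
  have h01 := hc.2 _ hφd hrange (show (0 : unitInterval) ≤ 1 from unitInterval.nonneg')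
  have hφ0 : φ 0 = x := by
    simp only [hφ, ContinuousMap.coe_mk]
    rw [min_eq_right unitInterval.nonneg', max_eq_left unitInterval.nonneg']
  have hφ1 : φ 1 = y := by
    simp only [hφ, ContinuousMap.coe_mk]
    rw [min_eq_left unitInterval.le_one', max_eq_right hxy]
  simpa [Function.comp, hφ0, hφ1] using h01

/-- A product of saturated d-spaces, with directed paths those whose projections
are all directed, is saturated. -/
theorem stmt_10 {J : Type*} {X : J → Type*} [∀ j, TopologicalSpace (X j)]
    (D : ∀ j, DSpace (X j)) (hD : ∀ j, IsSaturated (D j).d) :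
    IsSaturated {p : C(unitInterval, ∀ j, X j) |
      ∀ j, (ContinuousMap.mk (fun x : ∀ i, X i => x j) (continuous_apply j)).comp p
        ∈ (D j).d} := by
  set dP : Set C(unitInterval, ∀ j, X j) := {p |
      ∀ j, (ContinuousMap.mk (fun x : ∀ i, X i => x j) (continuous_apply j)).comp p
        ∈ (D j).d} with hdP
  apply Set.Subset.antisymm
  · -- weakly directed ⊆ directed
    intro p hp j
    rw [← hD j]
    intro U hU c hc t ht
    have hc' : IsDirectedFn dP ((fun x : ∀ i, X i => x j) ⁻¹' U)
        (c ∘ fun x : ∀ i, X i => x j) := by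
      constructor
      · exact hc.1.comp (continuous_apply j).continuousOn (fun x hx => hx)
      · intro q hq hr
        have hrange : Set.range ⇑((ContinuousMap.mk (fun x : ∀ i, X i => x j)
            (continuous_apply j)).comp q) ⊆ U := by
          rintro _ ⟨s, rfl⟩
          exact hr ⟨s, rfl⟩
        exact hc.2 _ (hq j) hrange
    obtain ⟨V, hV, hVsub, hVmono⟩ :=
      hp ((fun x : ∀ i, X i => x j) ⁻¹' U) (hU.preimage (continuous_apply j))
        (c ∘ fun x : ∀ i, X i => x j) hc' t ht
    exact ⟨V, hV, hVsub, hVmono⟩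
  · -- directed ⊆ weakly directed
    intro p hp
    refine mem_satPaths_of_reparam dP ?_ hp
    intro q hq φ hφ j
    exact (D j).reparam_mem _ (hq j) φ hφ
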